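/- Let S be a numerical semigroup of type 3 with PF(S) = {P, Q, F} where P < Q < F = F(S). Suppose P + Q − F ∈ S and Q − P ∈ M(S). Let I₁ = {x ∈ M(S) : x − (Q−P) ∈ S}. Then for every s ∈ S and i ∈ I₁ with s < i, we have Q − i ∈ I₁ and Q − s ∉ S ∪ I₁; consequently the map (s,i) ↦ (Q−i, Q−s) is an injection from {(s,i) : s ∈ S, i ∈ I₁, s < i} into {(i,g) : i ∈ I₁, g ∉ S ∪ I₁, g ≥ 0, i < g}, and hence |λ(S)| ≤ |λ(S ∪ I₁)|. -/

import Mathlib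

/-- The size of the partition associated to a numerical set `T`. -/
noncomputable def lamSize (T : Set ℕ) : ℕ :=
  {p : ℕ × ℕ | p.1 ∈ T ∧ p.2 ∉ T ∧ p.1 < p.2}.ncard

theorem stmt_19 (S : Set ℕ) (P Q F : ℕ)
    (h0 : 0 ∈ S) (hadd : ∀ a ∈ S, ∀ b ∈ S, a + b ∈ S)
    (hfin : {n : ℕ | n ∉ S}.Finite)
    (hF : IsGreatest {n : ℕ | n ∉ S} F)
    (hPQ : P < Q) (hQF : Q < F)
    (hPF : {x : ℕ | x ∉ S ∧ ∀ t ∈ S, t ≠ 0 → x + t ∈ S} = ({P, Q, F} : Set ℕ))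
    (hPQF : ∃ a ∈ S, a + F = P + Q)
    (hQP : Q - P ∈ {x : ℕ | x ∉ S ∧ F - x ∉ S})
    (I₁ : Set ℕ)
    (hI₁ : I₁ = {x : ℕ | x ∈ {y : ℕ | y ∉ S ∧ F - y ∉ S} ∧
      Q - P ≤ x ∧ x - (Q - P) ∈ S}) :
    (∀ s ∈ S, ∀ i ∈ I₁, s < i → Q - i ∈ I₁ ∧ Q - s ∉ S ∪ I₁) ∧
    Set.InjOn (fun p : ℕ × ℕ => (Q - p.2, Q - p.1))
      {p : ℕ × ℕ | p.1 ∈ S ∧ p.2 ∈ I₁ ∧ p.1 < p.2} ∧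
    Set.MapsTo (fun p : ℕ × ℕ => (Q - p.2, Q - p.1))
      {p : ℕ × ℕ | p.1 ∈ S ∧ p.2 ∈ I₁ ∧ p.1 < p.2}
      {p : ℕ × ℕ | p.1 ∈ I₁ ∧ p.2 ∉ S ∪ I₁ ∧ p.1 < p.2} ∧
    lamSize S ≤ lamSize (S ∪ I₁) := by
  have hgapF : ∀ x : ℕ, x ∉ S → x ≤ F := fun x hx => hF.2 hx
  have hQS : Q ∉ S := by
    have : Q ∈ {x : ℕ | x ∉ S ∧ ∀ t ∈ S, t ≠ 0 → x + t ∈ S} := by rw [hPF]; simp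
    exact this.1
  have hPS : P ∉ S := by
    have : P ∈ {x : ℕ | x ∉ S ∧ ∀ t ∈ S, t ≠ 0 → x + t ∈ S} := by rw [hPF]; simp
    exact this.1
  have hdS : Q - P ∉ S := hQP.1
  have hFdS : F - (Q - P) ∉ S := hQP.2
  -- every gap is dominated by a pseudo-Frobenius number
  have pfl : ∀ x : ℕ, x ∉ S → ∃ f ∈ ({P, Q, F} : Set ℕ), ∃ u ∈ S, x + u = f := by
    intro x hx
    have hGfin : {y : ℕ | y ∉ S ∧ ∃ u ∈ S, x + u = y}.Finite :=
      hfin.subset (fun y hy => hy.1)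
    have hGne : {y : ℕ | y ∉ S ∧ ∃ u ∈ S, x + u = y}.Nonempty :=
      ⟨x, hx, 0, h0, by omega⟩
    obtain ⟨m, hmG, hmax⟩ := Set.Finite.exists_maximalFor id _ hGfin hGne
    have hm : m ∈ {x : ℕ | x ∉ S ∧ ∀ t ∈ S, t ≠ 0 → x + t ∈ S} := by
      refine ⟨hmG.1, fun t ht htne => ?_⟩
      by_contra hmt
      obtain ⟨u, huS, hxu⟩ := hmG.2
      have hmem : m + t ∈ {y : ℕ | y ∉ S ∧ ∃ u ∈ S, x + u = y} :=
        ⟨hmt, u + t, hadd u huS t ht, by omega⟩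
      have := hmax hmem (by simp)
      simp at this; omega
    rw [hPF] at hm
    exact ⟨m, hm, hmG.2⟩
  -- key lemma
  have key : ∀ j ∈ I₁, j ≤ P ∧ Q - j ∈ I₁ := by
    intro j hj
    rw [hI₁] at hj
    obtain ⟨⟨hjS, hFjS⟩, hdj, hjd⟩ := hj
    obtain ⟨f, hf, u, huS, hxu⟩ := pfl j hjS
    have hjF : j ≤ F := hgapF j hjS
    simp only [Set.mem_insert_iff, Set.mem_singleton_iff] at hf
    have hfP : j + u = P := by
      rcases hf with hf | hf | hf
      · exact hf ▸ hxu
      · exfalso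
        have h2 := hadd u huS _ hjd
        have : u + (j - (Q - P)) = P := by omega
        rw [this] at h2
        exact hPS h2
      · exfalso
        have : F - j = u := by omega
        exact hFjS (this ▸ huS)
    have hjP : j ≤ P := by omega
    refine ⟨hjP, ?_⟩
    rw [hI₁]
    refine ⟨⟨?_, ?_⟩, by omega, ?_⟩
    · intro h
      have h2 := hadd _ h _ hjd
      have : Q - j + (j - (Q - P)) = P := by omega
      rw [this] at h2
      exact hPS h2
    · intro h
      have h2 := hadd _ h _ huS
      have : F - (Q - j) + u = F - (Q - P) := by omega
      rw [this] at h2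
      exact hFdS h2
    · have : Q - j - (Q - P) = u := by omega
      rw [this]; exact huS
  have hI₁gap : ∀ x ∈ I₁, x ∉ S := by
    intro x hx; rw [hI₁] at hx; exact hx.1.1
  -- part 1
  have part1 : ∀ s ∈ S, ∀ i ∈ I₁, s < i → Q - i ∈ I₁ ∧ Q - s ∉ S ∪ I₁ := by
    intro s hs i hi hsi
    obtain ⟨hiP, hQi⟩ := key i hi
    refine ⟨hQi, ?_⟩
    rintro (h | h)
    · have h2 := hadd s hs _ h
      have : s + (Q - s) = Q := by omega
      rw [this] at h2
      exact hQS h2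
    · obtain ⟨hP', hQQ⟩ := key _ h
      have : Q - (Q - s) = s := by omega
      rw [this] at hQQ
      exact hI₁gap _ hQQ hs
  -- injectivity
  have inj : Set.InjOn (fun p : ℕ × ℕ => (Q - p.2, Q - p.1))
      {p : ℕ × ℕ | p.1 ∈ S ∧ p.2 ∈ I₁ ∧ p.1 < p.2} := by
    rintro ⟨s1, i1⟩ ⟨hs1, hi1, hlt1⟩ ⟨s2, i2⟩ ⟨hs2, hi2, hlt2⟩ heq
    simp only [Prod.mk.injEq] at heq ⊢
    have h1 := (key i1 hi1).1
    have h2 := (key i2 hi2).1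
    omega
  -- maps to
  have maps : Set.MapsTo (fun p : ℕ × ℕ => (Q - p.2, Q - p.1))
      {p : ℕ × ℕ | p.1 ∈ S ∧ p.2 ∈ I₁ ∧ p.1 < p.2}
      {p : ℕ × ℕ | p.1 ∈ I₁ ∧ p.2 ∉ S ∪ I₁ ∧ p.1 < p.2} := by
    rintro ⟨s, i⟩ ⟨hs, hi, hlt⟩
    have hiP := (key i hi).1
    exact ⟨(part1 s hs i hi hlt).1, (part1 s hs i hi hlt).2, show Q - i < Q - s by omega⟩
  -- cardinality bookkeeping
  set B := {p : ℕ × ℕ | p.1 ∈ S ∧ p.2 ∈ I₁ ∧ p.1 < p.2} with hBdef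
  set A := {p : ℕ × ℕ | p.1 ∈ I₁ ∧ p.2 ∉ S ∪ I₁ ∧ p.1 < p.2} with hAdef
  set C := {p : ℕ × ℕ | p.1 ∈ S ∧ p.2 ∉ S ∪ I₁ ∧ p.1 < p.2} with hCdef
  have hbig : ∀ D : Set (ℕ × ℕ), (∀ p ∈ D, p.2 ∉ S ∧ p.1 < p.2) → D.Finite := by
    intro D hD
    apply Set.Finite.subset ((Set.finite_Iic F).prod (Set.finite_Iic F))
    rintro ⟨x, y⟩ hp
    obtain ⟨h1, h2⟩ := hD _ hp
    have := hgapF y h1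
    simp only [Set.mem_prod, Set.mem_Iic]
    omega
  have finB : B.Finite := hbig B (fun p hp => ⟨hI₁gap _ hp.2.1, hp.2.2⟩)
  have finA : A.Finite := hbig A (fun p hp => ⟨fun h => hp.2.1 (Or.inl h), hp.2.2⟩)
  have finC : C.Finite := hbig C (fun p hp => ⟨fun h => hp.2.1 (Or.inl h), hp.2.2⟩)
  have hsplit : {p : ℕ × ℕ | p.1 ∈ S ∧ p.2 ∉ S ∧ p.1 < p.2} = C ∪ B := by
    ext ⟨x, y⟩
    simp only [hBdef, hCdef, Set.mem_setOf_eq, Set.mem_union]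
    constructor
    · rintro ⟨h1, h2, h3⟩
      by_cases hy : y ∈ I₁
      · exact Or.inr ⟨h1, hy, h3⟩
      · exact Or.inl ⟨h1, fun h => h.elim h2 hy, h3⟩
    · rintro (⟨h1, h2, h3⟩ | ⟨h1, h2, h3⟩)
      · exact ⟨h1, fun h => h2 (Or.inl h), h3⟩
      · exact ⟨h1, hI₁gap _ h2, h3⟩
  have hdCB : Disjoint C B := by
    rw [Set.disjoint_left]
    rintro ⟨x, y⟩ hC' hB'
    exact hC'.2.1 (Or.inr hB'.2.1)
  have hdCA : Disjoint C A := by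
    rw [Set.disjoint_left]
    rintro ⟨x, y⟩ hC' hA'
    exact hI₁gap _ hA'.1 hC'.1
  have e1 : lamSize S = C.ncard + B.ncard := by
    rw [lamSize, hsplit, Set.ncard_union_eq hdCB finC finB]
  have hBA : B.ncard ≤ A.ncard := Set.ncard_le_ncard_of_injOn _ maps inj finA
  have hsub : C ∪ A ⊆ {p : ℕ × ℕ | p.1 ∈ S ∪ I₁ ∧ p.2 ∉ S ∪ I₁ ∧ p.1 < p.2} := by
    rintro ⟨x, y⟩ (⟨h1, h2, h3⟩ | ⟨h1, h2, h3⟩)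
    · exact ⟨Or.inl h1, h2, h3⟩
    · exact ⟨Or.inr h1, h2, h3⟩
  have e2 : C.ncard + A.ncard ≤ lamSize (S ∪ I₁) := by
    rw [lamSize, ← Set.ncard_union_eq hdCA finC finA]
    exact Set.ncard_le_ncard hsub
      (hbig _ (fun p hp => ⟨fun h => hp.2.1 (Or.inl h), hp.2.2⟩))
  exact ⟨part1, inj, maps, by omega⟩
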